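/- Let G be a connected graph of order n ≥ 2 and let H be a connected graph with at least two vertices. Let x be a vertex of G, let v be a vertex of H, let B be a strong metric basis of the rooted product graph G∘_v H, let B_x = B ∩ ({x} × V(H)), and let M(v) be the set of vertices of H which are maximally distant from v. Then: (i) |B_x| ≥ dim_s(H) − 1; (ii) if B_x ⊇ {x} × M(v), then |B_x| ≥ dim_s(H); (iii) if v does not belong to any strong metric basis of H, then |B_x| ≥ dim_s(H). -/

import Mathlib

namespace RootedStrong

variable {V : Type*}

/-- `u` is maximally distant from `v`: every neighbor `w` of `u` satisfies `d(v,w) ≤ d(u,v)`. -/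
def MaxDistant (G : SimpleGraph V) (u v : V) : Prop :=
  ∀ w, G.Adj u w → G.dist v w ≤ G.dist u v

/-- `u` and `v` are mutually maximally distant. -/
def MMD (G : SimpleGraph V) (u v : V) : Prop :=
  MaxDistant G u v ∧ MaxDistant G v u

/-- The boundary `∂(G)` of a graph. -/
def boundary (G : SimpleGraph V) : Set V := {u | ∃ v, MMD G u v}

/-- A vertex is simplicial if its neighborhood induces a complete graph. -/
def Simplicial (G : SimpleGraph V) (u : V) : Prop :=
  ∀ x ∈ G.neighborSet u, ∀ y ∈ G.neighborSet u, x ≠ y → G.Adj x y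

/-- The set `σ(G)` of simplicial vertices. -/
def simplicialSet (G : SimpleGraph V) : Set V := {u | Simplicial G u}

/-- `w` strongly resolves `u` and `v`. -/
def StronglyResolves (G : SimpleGraph V) (w u v : V) : Prop :=
  G.dist w u = G.dist w v + G.dist v u ∨ G.dist w v = G.dist w u + G.dist u v

/-- A set of vertices is a strong metric generator if every pair of distinct vertices is
strongly resolved by some of its elements. -/
def IsStrongGenerator (G : SimpleGraph V) (S : Set V) : Prop :=
  ∀ u v : V, u ≠ v → ∃ w ∈ S, StronglyResolves G w u v

/-- The strong metric dimension of a graph. -/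
noncomputable def sdim (G : SimpleGraph V) [Fintype V] : ℕ :=
  sInf {n | ∃ S : Finset V, S.card = n ∧ IsStrongGenerator G (S : Set V)}

/-- A strong metric basis: a strong metric generator of minimum cardinality. -/
def IsStrongBasis (G : SimpleGraph V) [Fintype V] (S : Finset V) : Prop :=
  IsStrongGenerator G (S : Set V) ∧ S.card = sdim G

/-- The rooted product graph `G ∘_v H`. -/
def rootedProd {α β : Type*} (G : SimpleGraph α) (H : SimpleGraph β) (v : β) :
    SimpleGraph (α × β) where
  Adj p q := (p.1 = q.1 ∧ H.Adj p.2 q.2) ∨ (p.2 = v ∧ q.2 = v ∧ G.Adj p.1 q.1)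
  symm := by
    constructor
    rintro ⟨a, x⟩ ⟨b, y⟩ (⟨h1, h2⟩ | ⟨h1, h2, h3⟩)
    · exact Or.inl ⟨h1.symm, h2.symm⟩
    · exact Or.inr ⟨h2, h1, h3.symm⟩
  loopless := by
    constructor
    rintro ⟨a, x⟩ (⟨_, h2⟩ | ⟨_, _, h3⟩)
    · exact H.loopless.irrefl _ h2
    · exact G.loopless.irrefl _ h3

/-- Two distinct vertices are true twins if they have equal closed neighborhoods. -/
def TrueTwins (G : SimpleGraph V) (x y : V) : Prop :=
  x ≠ y ∧ ∀ z, (z = x ∨ G.Adj x z) ↔ (z = y ∨ G.Adj y z)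

/-- A twin-free clique: a clique containing no pair of true twins. -/
def IsTwinFreeClique (G : SimpleGraph V) (X : Set V) : Prop :=
  (∀ x ∈ X, ∀ y ∈ X, x ≠ y → G.Adj x y) ∧ ∀ x ∈ X, ∀ y ∈ X, ¬ TrueTwins G x y

/-- The twin-free clique number `ϖ(G)`. -/
noncomputable def twinFreeCliqueNum (G : SimpleGraph V) : ℕ :=
  sSup {n | ∃ X : Set V, IsTwinFreeClique G X ∧ X.ncard = n}



section AuxLemmas

open SimpleGraph

variable {α β : Type*} (G : SimpleGraph α) (H : SimpleGraph β) (v : β)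

/-- Embedding of the copy of `H` at `a`. -/
def copyHom (a : α) : H →g rootedProd G H v where
  toFun b := (a, b)
  map_rel' h := Or.inl ⟨rfl, h⟩

/-- Embedding of `G` via root vertices. -/
def rootHom : G →g rootedProd G H v where
  toFun a := (a, v)
  map_rel' h := Or.inr ⟨rfl, rfl, h⟩

lemma proj_walk : ∀ {p q : α × β} (W : (rootedProd G H v).Walk p q),
    ∃ W' : H.Walk p.2 q.2, W'.length ≤ W.length := by
  intro p q W
  induction W with
  | nil => exact ⟨SimpleGraph.Walk.nil, le_refl 0⟩
  | cons h W ih =>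
    obtain ⟨W', hW'⟩ := ih
    rcases h with ⟨h1, h2⟩ | ⟨h1, h2, _⟩
    · exact ⟨SimpleGraph.Walk.cons h2 W', Nat.succ_le_succ hW'⟩
    · refine ⟨W'.copy (h1.trans h2.symm).symm rfl, ?_⟩
      rw [SimpleGraph.Walk.length_copy]
      exact hW'.trans (Nat.le_succ _)

lemma dist_le_proj {p q : α × β} (W : (rootedProd G H v).Walk p q) :
    H.dist p.2 q.2 ≤ W.length := by
  obtain ⟨W', hW'⟩ := proj_walk G H v W
  exact (SimpleGraph.dist_le W').trans hW'

lemma rootedConnected (hG : G.Connected) (hH : H.Connected) :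
    (rootedProd G H v).Connected := by
  rw [SimpleGraph.connected_iff]
  refine ⟨fun p q => ?_, ⟨(hG.nonempty.some, hH.nonempty.some)⟩⟩
  have r1 : (rootedProd G H v).Reachable (p.1, p.2) (p.1, v) :=
    (hH.preconnected p.2 v).map (copyHom G H v p.1)
  have r2 : (rootedProd G H v).Reachable (p.1, v) (q.1, v) :=
    (hG.preconnected p.1 q.1).map (rootHom G H v)
  have r3 : (rootedProd G H v).Reachable (q.1, v) (q.1, q.2) :=
    (hH.preconnected v q.2).map (copyHom G H v q.1)
  exact r1.trans (r2.trans r3)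

lemma distA (hH : H.Connected) (a : α) (u w : β) :
    (rootedProd G H v).dist (a, u) (a, w) = H.dist u w := by
  apply le_antisymm
  · obtain ⟨W, hW⟩ := hH.exists_walk_length_eq_dist u w
    have := SimpleGraph.dist_le (W.map (copyHom G H v a))
    rwa [SimpleGraph.Walk.length_map, hW] at this
  · have hr : (rootedProd G H v).Reachable (a, u) (a, w) :=
      (hH.preconnected u w).map (copyHom G H v a)
    obtain ⟨W, hW⟩ := hr.exists_walk_length_eq_dist
    have := dist_le_proj G H v W
    rwa [hW] at this

lemma claimC (hG : G.Connected) (hH : H.Connected) :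
    ∀ {p q : α × β} (W : (rootedProd G H v).Walk p q), p.1 ≠ q.1 →
    (rootedProd G H v).dist p (q.1, v) + H.dist v q.2 ≤ W.length := by
  intro p q W
  induction W with
  | nil => intro h; exact absurd rfl h
  | @cons p r q h W ih =>
    intro hpq
    have hd1 : (rootedProd G H v).dist p r ≤ 1 := by
      simpa using SimpleGraph.dist_le (SimpleGraph.Walk.cons h SimpleGraph.Walk.nil)
    by_cases hr : r.1 = q.1
    · have hpr : p.1 ≠ r.1 := fun e => hpq (e.trans hr)
      rcases h with ⟨h1, _⟩ | ⟨_, h2, _⟩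
      · exact absurd h1 hpr
      · have hrv : r = (q.1, v) := Prod.ext hr h2
        have d2 : H.dist v q.2 ≤ W.length := by
          have := dist_le_proj G H v W
          rwa [h2] at this
        have d1 : (rootedProd G H v).dist p (q.1, v) ≤ 1 := hrv ▸ hd1
        change _ ≤ W.length + 1
        omega
    · have hIH := ih hr
      have tri : (rootedProd G H v).dist p (q.1, v) ≤
          (rootedProd G H v).dist p r + (rootedProd G H v).dist r (q.1, v) :=
        (rootedConnected G H v hG hH).dist_triangle
      simp only [SimpleGraph.Walk.length_cons]
      omega

lemma distB (hG : G.Connected) (hH : H.Connected) {a x₀ : α} (hax : a ≠ x₀) (b u : β) :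
    (rootedProd G H v).dist (a, b) (x₀, u) =
      (rootedProd G H v).dist (a, b) (x₀, v) + H.dist v u := by
  have hR := rootedConnected G H v hG hH
  apply le_antisymm
  · calc (rootedProd G H v).dist (a, b) (x₀, u)
        ≤ (rootedProd G H v).dist (a, b) (x₀, v) + (rootedProd G H v).dist (x₀, v) (x₀, u) :=
          hR.dist_triangle
      _ = _ := by rw [distA G H v hH]
  · obtain ⟨W, hW⟩ := hR.exists_walk_length_eq_dist (a, b) (x₀, u)
    have := claimC G H v hG hH W hax
    rwa [hW] at this

lemma exists_maxdist_resolver [Fintype β] (hH : H.Connected) {u w : β}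
    (h : H.dist v u = H.dist v w + H.dist w u) :
    ∃ u', MaxDistant H u' v ∧ H.dist u' w = H.dist u' u + H.dist u w := by
  classical
  set S : Finset β := Finset.univ.filter (fun z => H.dist v z = H.dist v u + H.dist u z)
    with hS
  have hu : u ∈ S := by simp [hS]
  obtain ⟨u', hu'S, hmax⟩ := S.exists_max_image (fun z => H.dist v z) ⟨u, hu⟩
  have hu'eq : H.dist v u' = H.dist v u + H.dist u u' := by
    simpa [hS] using hu'S
  refine ⟨u', ?_, ?_⟩
  · intro z hz
    by_contra hc
    push_neg at hc
    have hadj : H.dist u' z = 1 := SimpleGraph.dist_eq_one_iff_adj.mpr hz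
    have t1 : H.dist v z ≤ H.dist v u' + H.dist u' z := hH.dist_triangle
    have t2 : H.dist u z ≤ H.dist u u' + H.dist u' z := hH.dist_triangle
    have t3 : H.dist v z ≤ H.dist v u + H.dist u z := hH.dist_triangle
    have hcv : H.dist u' v = H.dist v u' := SimpleGraph.dist_comm
    have hz' : H.dist v z = H.dist v u + H.dist u z := by omega
    have := hmax z (by simp [hS, hz'])
    omega
  · have t1 : H.dist v u' ≤ H.dist v w + H.dist w u' := hH.dist_triangle
    have t2 : H.dist w u' ≤ H.dist w u + H.dist u u' := hH.dist_triangle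
    have c1 : H.dist u' w = H.dist w u' := SimpleGraph.dist_comm
    have c2 : H.dist u' u = H.dist u u' := SimpleGraph.dist_comm
    have c3 : H.dist u w = H.dist w u := SimpleGraph.dist_comm
    omega

end AuxLemmas

theorem statement15 {α β : Type*} [Fintype α] [Fintype β]
    (G : SimpleGraph α) (H : SimpleGraph β)
    (hG : G.Connected) (hH : H.Connected)
    (h2 : 2 ≤ Fintype.card α) (h2b : 2 ≤ Fintype.card β)
    (x : α) (v : β) (B : Finset (α × β)) (hB : IsStrongBasis (rootedProd G H v) B)
    (Bx : Set (α × β)) (hBx : Bx = (B : Set (α × β)) ∩ {p : α × β | p.1 = x}) :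
    sdim H - 1 ≤ Bx.ncard ∧
    (({x} : Set α) ×ˢ {u : β | MaxDistant H u v} ⊆ Bx → sdim H ≤ Bx.ncard) ∧
    ((∀ S : Finset β, IsStrongBasis H S → v ∉ S) → sdim H ≤ Bx.ncard) := by
  classical
  set Bxf : Finset (α × β) := B.filter (fun p => p.1 = x) with hBxfdef
  have hBxf : Bx = ↑Bxf := by
    rw [hBx, hBxfdef]
    ext p
    simp [Finset.mem_filter]
  have hcard : Bx.ncard = Bxf.card := by rw [hBxf, Set.ncard_coe_finset]
  have key : ∀ u w : β, u ≠ w →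
      (∃ b, (x, b) ∈ Bxf ∧ StronglyResolves H b u w) ∨
      (H.dist v u = H.dist v w + H.dist w u ∨ H.dist v w = H.dist v u + H.dist u w) := by
    intro u w huw
    obtain ⟨⟨a, b⟩, hq, hres⟩ := hB.1 (x, u) (x, w)
      (fun e => huw (congrArg Prod.snd e))
    by_cases hax : a = x
    · subst hax
      left
      refine ⟨b, by rw [hBxfdef]; exact Finset.mem_filter.mpr ⟨hq, rfl⟩, ?_⟩
      rcases hres with h | h
      · left
        rwa [distA G H v hH, distA G H v hH, distA G H v hH] at h
      · right
        rwa [distA G H v hH, distA G H v hH, distA G H v hH] at h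
    · right
      have h1 := distB G H v hG hH hax b u
      have h2 := distB G H v hG hH hax b w
      rcases hres with h | h
      · left
        rw [h1, h2, distA G H v hH] at h
        omega
      · right
        rw [h1, h2, distA G H v hH] at h
        omega
  have sdim_le : ∀ T : Finset β, IsStrongGenerator H ↑T → sdim H ≤ T.card :=
    fun T hT => Nat.sInf_le ⟨T, rfl, hT⟩
  have gen1 : IsStrongGenerator H ↑(insert v (Bxf.image Prod.snd)) := by
    intro u w huw
    rcases key u w huw with ⟨b, hb, hres⟩ | hv'
    · refine ⟨b, ?_, hres⟩
      simp only [Finset.coe_insert, Set.mem_insert_iff, Finset.mem_coe]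
      exact Or.inr (Finset.mem_image.mpr ⟨(x, b), hb, rfl⟩)
    · exact ⟨v, by simp, hv'⟩
  have himg : (Bxf.image Prod.snd).card ≤ Bxf.card := Finset.card_image_le
  have h1 : sdim H ≤ Bxf.card + 1 := by
    have hle := sdim_le _ gen1
    have hins : (insert v (Bxf.image Prod.snd)).card ≤ (Bxf.image Prod.snd).card + 1 :=
      Finset.card_insert_le _ _
    omega
  refine ⟨by omega, ?_, ?_⟩
  · intro hsub
    have gen2 : IsStrongGenerator H ↑(Bxf.image Prod.snd) := by
      intro u w huw
      rcases key u w huw with ⟨b, hb, hres⟩ | hv'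
      · exact ⟨b, Finset.mem_coe.mpr (Finset.mem_image.mpr ⟨(x, b), hb, rfl⟩), hres⟩
      · rcases hv' with h | h
        · obtain ⟨u', hmd, he⟩ := exists_maxdist_resolver H v hH h
          have hx : (x, u') ∈ Bx := hsub ⟨rfl, hmd⟩
          rw [hBxf] at hx
          exact ⟨u', Finset.mem_coe.mpr (Finset.mem_image.mpr ⟨(x, u'), hx, rfl⟩),
            Or.inr he⟩
        · obtain ⟨u', hmd, he⟩ := exists_maxdist_resolver H v hH h
          have hx : (x, u') ∈ Bx := hsub ⟨rfl, hmd⟩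
          rw [hBxf] at hx
          exact ⟨u', Finset.mem_coe.mpr (Finset.mem_image.mpr ⟨(x, u'), hx, rfl⟩),
            Or.inl he⟩
    have := sdim_le _ gen2
    omega
  · intro hnov
    by_contra hlt
    push_neg at hlt
    by_cases hmem : v ∈ Bxf.image Prod.snd
    · have heq : insert v (Bxf.image Prod.snd) = Bxf.image Prod.snd :=
        Finset.insert_eq_self.mpr hmem
      have hle := sdim_le _ (heq ▸ gen1)
      omega
    · have hcardT : (insert v (Bxf.image Prod.snd)).card = (Bxf.image Prod.snd).card + 1 :=
        Finset.card_insert_of_notMem hmem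
      have hle := sdim_le _ gen1
      have hbasis : IsStrongBasis H (insert v (Bxf.image Prod.snd)) := ⟨gen1, by omega⟩
      exact hnov _ hbasis (Finset.mem_insert_self v _)


end RootedStrong
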